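/- Let γ : [0,τ₀] → ℝⁿ be Lipschitz, γ_l its arc-length reparameterization on [0, l(0,τ₀)], and f : ℝⁿ → ℝⁿ a map. If for every t ∈ [0,τ₀] with τ₂(t) < τ₀ one has lim_{r→τ₂(t)⁺} f(γ(r)) = f(γ(t)), then for every s ∈ [0, l(0,τ₀)), lim_{r→s⁺} f(γ_l(r)) = f(γ_l(s)). -/

import Mathlib

open Set Filter Topology

/-- Arc length of `γ` on `[t₁, t₂]`: the supremum over partitions of `Σᵢ |γ(rᵢ) - γ(rᵢ₋₁)|`. -/
noncomputable def arcLen {n : ℕ} (γ : ℝ → EuclideanSpace ℝ (Fin n)) (t₁ t₂ : ℝ) : ℝ :=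
  (eVariationOn γ (Set.Icc t₁ t₂)).toReal

/-- Left endpoint of the maximal constancy interval of `γ` (on `[0, τ₀]`) containing `t`. -/
noncomputable def tau₁ {n : ℕ} (γ : ℝ → EuclideanSpace ℝ (Fin n)) (t : ℝ) : ℝ :=
  sInf {τ ∈ Set.Icc 0 t | ∀ r ∈ Set.Icc τ t, γ r = γ t}

/-- Right endpoint of the maximal constancy interval of `γ` on `[0, τ₀]` containing `t`. -/
noncomputable def tau₂ {n : ℕ} (γ : ℝ → EuclideanSpace ℝ (Fin n)) (τ₀ t : ℝ) : ℝ :=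
  sSup {τ ∈ Set.Icc t τ₀ | ∀ r ∈ Set.Icc t τ, γ r = γ t}

theorem right_continuity_along_reparam {n : ℕ} (τ₀ : ℝ) (hτ₀ : 0 ≤ τ₀) (κ : NNReal)
    (γ : ℝ → EuclideanSpace ℝ (Fin n)) (hγ : LipschitzOnWith κ γ (Set.Icc 0 τ₀))
    (γl : ℝ → EuclideanSpace ℝ (Fin n))
    (hγl : ∀ t ∈ Set.Icc 0 τ₀, γl (arcLen γ 0 t) = γ t)
    (f : EuclideanSpace ℝ (Fin n) → EuclideanSpace ℝ (Fin n))
    (hf : ∀ t ∈ Set.Icc 0 τ₀, tau₂ γ τ₀ t < τ₀ →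
      Tendsto (fun r => f (γ r)) (nhdsWithin (tau₂ γ τ₀ t) (Set.Ioc (tau₂ γ τ₀ t) τ₀))
        (nhds (f (γ t)))) :
    ∀ s ∈ Set.Ico 0 (arcLen γ 0 τ₀),
      Tendsto (fun r => f (γl r)) (nhdsWithin s (Set.Ioc s (arcLen γ 0 τ₀)))
        (nhds (f (γl s))) := by
  intro s hs
  set l : ℝ → ℝ := fun u => arcLen γ 0 u with hl_def
  -- quantitative bound on the variation
  have hbound : ∀ a b : ℝ, 0 ≤ a → a ≤ b → b ≤ τ₀ →
      eVariationOn γ (Set.Icc a b) ≤ (κ : ENNReal) * ENNReal.ofReal (b - a) := by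
    intro a b ha hab hb
    have hmaps : Set.MapsTo (id : ℝ → ℝ) (Set.Icc a b) (Set.Icc 0 τ₀) := fun x hx =>
      ⟨ha.trans hx.1, hx.2.trans hb⟩
    have h1 := hγ.comp_eVariationOn_le hmaps
    have h2 : eVariationOn (id : ℝ → ℝ) (Set.Icc a b) ≤ ENNReal.ofReal (b - a) := by
      have := (monotoneOn_id (s := Set.Icc a b)).eVariationOn_le
        (Set.left_mem_Icc.2 hab) (Set.right_mem_Icc.2 hab)
      simpa using this
    calc eVariationOn γ (Set.Icc a b) = eVariationOn (γ ∘ id) (Set.Icc a b) := rfl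
      _ ≤ κ * eVariationOn (id : ℝ → ℝ) (Set.Icc a b) := h1
      _ ≤ κ * ENNReal.ofReal (b - a) := mul_le_mul_right h2 _
  have hfin : ∀ a b : ℝ, 0 ≤ a → b ≤ τ₀ → eVariationOn γ (Set.Icc a b) ≠ ⊤ := by
    intro a b ha hb
    rcases le_or_gt a b with hab | hab
    · exact ((hbound a b ha hab hb).trans_lt
        (ENNReal.mul_lt_top ENNReal.coe_lt_top ENNReal.ofReal_lt_top)).ne
    · rw [Set.Icc_eq_empty hab.not_ge,
        eVariationOn.subsingleton γ Set.subsingleton_empty]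
      exact ENNReal.zero_ne_top
  -- additivity of arc length
  have hadd : ∀ a b c : ℝ, 0 ≤ a → a ≤ b → b ≤ c → c ≤ τ₀ →
      arcLen γ a c = arcLen γ a b + arcLen γ b c := by
    intro a b c ha hab hbc hc
    have key := eVariationOn.Icc_add_Icc γ (s := Set.Icc a c) hab hbc
      (Set.mem_Icc.2 ⟨hab, hbc⟩)
    rw [Set.inter_eq_self_of_subset_right (Set.Icc_subset_Icc le_rfl hbc),
      Set.inter_eq_self_of_subset_right (Set.Icc_subset_Icc hab le_rfl),
      Set.inter_self] at key
    rw [arcLen, arcLen, arcLen, ← key,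
      ENNReal.toReal_add (hfin a b ha (hbc.trans hc)) (hfin b c (ha.trans hab) hc)]
  have harcnonneg : ∀ a b : ℝ, 0 ≤ arcLen γ a b := fun a b => ENNReal.toReal_nonneg
  have hmono : ∀ a b : ℝ, 0 ≤ a → a ≤ b → b ≤ τ₀ → l a ≤ l b := by
    intro a b ha hab hb
    have := hadd 0 a b le_rfl ha hab hb
    simp only [hl_def]
    rw [this]
    linarith [harcnonneg a b]
  have hlipval : ∀ a b : ℝ, 0 ≤ a → a ≤ b → b ≤ τ₀ → l b - l a ≤ κ * (b - a) := by
    intro a b ha hab hb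
    have h1 := hadd 0 a b le_rfl ha hab hb
    have h2 := ENNReal.toReal_mono
      (ENNReal.mul_ne_top ENNReal.coe_ne_top ENNReal.ofReal_ne_top)
      (hbound a b ha hab hb)
    rw [ENNReal.toReal_mul, ENNReal.coe_toReal, ENNReal.toReal_ofReal (by linarith)] at h2
    simp only [hl_def]
    rw [h1]
    simpa [arcLen] using h2
  have hlipl : LipschitzOnWith κ l (Set.Icc 0 τ₀) := by
    apply LipschitzOnWith.of_dist_le_mul
    intro x hx y hy
    rcases le_total x y with h | h
    · rw [Real.dist_eq, Real.dist_eq, abs_of_nonpos (by linarith [hmono x y hx.1 h hy.2]),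
        abs_of_nonpos (by linarith)]
      have := hlipval x y hx.1 h hy.2
      linarith
    · rw [Real.dist_eq, Real.dist_eq, abs_of_nonneg (by linarith [hmono y x hy.1 h hx.2]),
        abs_of_nonneg (by linarith)]
      have := hlipval y x hy.1 h hx.2
      linarith
  have hcont : ContinuousOn l (Set.Icc 0 τ₀) := hlipl.continuousOn
  have hl0 : l 0 = 0 := by
    simp only [hl_def, arcLen, Set.Icc_self,
      eVariationOn.subsingleton γ Set.subsingleton_singleton, ENNReal.toReal_zero]
  -- find t with l t = s
  obtain ⟨t, ht, hlt⟩ : ∃ t ∈ Set.Icc 0 τ₀, l t = s := by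
    have : s ∈ Set.Icc (l 0) (l τ₀) := ⟨by rw [hl0]; exact hs.1, hs.2.le⟩
    obtain ⟨t, ht, hlt⟩ := intermediate_value_Icc hτ₀ hcont this
    exact ⟨t, ht, hlt⟩
  set S := {τ ∈ Set.Icc t τ₀ | ∀ r ∈ Set.Icc t τ, γ r = γ t} with hS_def
  have hτ₂eq : tau₂ γ τ₀ t = sSup S := rfl
  set τ₂ := tau₂ γ τ₀ t with hτ₂_def
  have htS : t ∈ S := ⟨⟨le_refl t, ht.2⟩, fun r hr => by rw [le_antisymm hr.2 hr.1]⟩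
  have hSbdd : BddAbove S := ⟨τ₀, fun x hx => hx.1.2⟩
  have hτ₂ge : t ≤ τ₂ := by rw [hτ₂eq]; exact le_csSup hSbdd htS
  have hτ₂le : τ₂ ≤ τ₀ := by
    rw [hτ₂eq]; exact csSup_le ⟨t, htS⟩ fun x hx => hx.1.2
  have hτ₂0 : 0 ≤ τ₂ := ht.1.trans hτ₂ge
  have hconst : ∀ r ∈ Set.Ico t τ₂, γ r = γ t := by
    intro r hr
    rw [hτ₂eq] at hr
    obtain ⟨τ, hτS, hrτ⟩ := exists_lt_of_lt_csSup ⟨t, htS⟩ hr.2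
    exact hτS.2 r ⟨hr.1, hrτ.le⟩
  have hγτ₂ : γ τ₂ = γ t := by
    rcases eq_or_lt_of_le hτ₂ge with h | h
    · rw [← h]
    · have hγc : ContinuousOn γ (Set.Icc 0 τ₀) := hγ.continuousOn
      have hsub : Set.Ico t τ₂ ⊆ Set.Icc 0 τ₀ := fun x hx =>
        ⟨ht.1.trans hx.1, hx.2.le.trans hτ₂le⟩
      have h1 : Tendsto γ (𝓝[Set.Ico t τ₂] τ₂) (𝓝 (γ τ₂)) :=
        (hγc τ₂ ⟨hτ₂0, hτ₂le⟩).mono_left (nhdsWithin_mono _ hsub)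
      have h2 : Tendsto γ (𝓝[Set.Ico t τ₂] τ₂) (𝓝 (γ t)) := by
        apply Tendsto.congr' _ tendsto_const_nhds
        filter_upwards [self_mem_nhdsWithin] with x hx using (hconst x hx).symm
      have hne : (𝓝[Set.Ico t τ₂] τ₂).NeBot := by
        rw [← mem_closure_iff_nhdsWithin_neBot, closure_Ico h.ne]
        exact ⟨hτ₂ge, le_refl _⟩
      exact tendsto_nhds_unique h1 h2
  have hconstIcc : ∀ r ∈ Set.Icc t τ₂, γ r = γ t := by
    intro r hr
    rcases lt_or_eq_of_le hr.2 with h | h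
    · exact hconst r ⟨hr.1, h⟩
    · rw [h, hγτ₂]
  have hlτ₂ : l τ₂ = s := by
    have h1 := hadd 0 t τ₂ le_rfl ht.1 hτ₂ge hτ₂le
    have h2 : arcLen γ t τ₂ = 0 := by
      rw [arcLen, eVariationOn.constant_on, ENNReal.toReal_zero]
      rintro x ⟨x', hx', rfl⟩ y ⟨y', hy', rfl⟩
      rw [hconstIcc x' hx', hconstIcc y' hy']
    simp only [hl_def]
    rw [h1, h2, add_zero]
    exact hlt
  have hτ₂lt : τ₂ < τ₀ := by
    rcases lt_or_eq_of_le hτ₂le with h | h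
    · exact h
    · exfalso; rw [h] at hlτ₂; exact absurd hlτ₂ (ne_of_gt hs.2)
  -- strict growth past τ₂
  have hgrow : ∀ u : ℝ, τ₂ < u → u ≤ τ₀ → s < l u := by
    intro u hu hu'
    rcases lt_or_ge s (l u) with h | h
    · exact h
    exfalso
    have hle : l τ₂ ≤ l u := hmono τ₂ u hτ₂0 hu.le hu'
    have hequ : l u = l τ₂ := le_antisymm (hlτ₂ ▸ h) hle
    have h1 := hadd 0 τ₂ u le_rfl hτ₂0 hu.le hu'
    have h2 : arcLen γ τ₂ u = 0 := by
      have : l u = l τ₂ + arcLen γ τ₂ u := h1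
      rw [hequ] at this; linarith
    have h3 : eVariationOn γ (Set.Icc τ₂ u) = 0 := by
      rcases ENNReal.toReal_eq_zero_iff _ |>.1 h2 with h | h
      · exact h
      · exact absurd h (hfin τ₂ u hτ₂0 hu')
    have h4 : ∀ x ∈ Set.Icc τ₂ u, γ x = γ t := by
      intro x hx
      have := (eVariationOn.eq_zero_iff γ).1 h3 τ₂ ⟨le_rfl, hu.le⟩ x hx
      rw [edist_eq_zero] at this
      rw [← this, hγτ₂]
    have huS : u ∈ S := by
      refine ⟨⟨hτ₂ge.trans hu.le, hu'⟩, fun r hr => ?_⟩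
      rcases le_total r τ₂ with h | h
      · exact hconstIcc r ⟨hr.1, h⟩
      · exact h4 r ⟨h, hr.2⟩
    have : u ≤ τ₂ := by rw [hτ₂eq]; exact le_csSup hSbdd huS
    exact absurd this hu.not_ge
  -- choice of preimages under l
  have hexists : ∀ r : ℝ, ∃ u, u ∈ Set.Icc τ₂ τ₀ ∧ (r ∈ Set.Ioc s (l τ₀) → l u = r) := by
    intro r
    by_cases hr : r ∈ Set.Ioc s (l τ₀)
    · have hsub := intermediate_value_Icc hτ₂le (hcont.mono (Set.Icc_subset_Icc hτ₂0 le_rfl))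
      have hmem : r ∈ Set.Icc (l τ₂) (l τ₀) := ⟨hlτ₂ ▸ hr.1.le, hr.2⟩
      obtain ⟨u, hu, hlu⟩ := hsub hmem
      exact ⟨u, hu, fun _ => hlu⟩
    · exact ⟨τ₂, ⟨le_rfl, hτ₂le⟩, fun h => absurd h hr⟩
  choose g hg1 hg2 using hexists
  have hgmem : ∀ r ∈ Set.Ioc s (l τ₀), g r ∈ Set.Ioc τ₂ τ₀ := by
    intro r hr
    refine ⟨?_, (hg1 r).2⟩
    rcases lt_or_ge τ₂ (g r) with h | h
    · exact h
    · exfalso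
      have : g r = τ₂ := le_antisymm h (hg1 r).1
      have : l (g r) = s := by rw [this, hlτ₂]
      rw [hg2 r hr] at this
      exact absurd this (ne_of_gt hr.1)
  have htends : Tendsto g (𝓝[Set.Ioc s (l τ₀)] s) (𝓝 τ₂) := by
    rw [tendsto_order]
    constructor
    · intro a ha
      filter_upwards [self_mem_nhdsWithin] with r hr
      exact ha.trans_le (hgmem r hr).1.le
    · intro b hb
      rcases le_or_gt b τ₀ with hbτ | hbτ
      · have hsb : s < l b := hgrow b hb hbτ
        filter_upwards [self_mem_nhdsWithin,
          Filter.Eventually.filter_mono nhdsWithin_le_nhds (gt_mem_nhds hsb)] with r hr hrb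
        rcases lt_or_ge (g r) b with h | h
        · exact h
        · exfalso
          have : l b ≤ l (g r) := hmono b (g r) (hτ₂0.trans hb.le) h (hg1 r).2
          rw [hg2 r hr] at this
          exact absurd (hrb.trans_le this) (lt_irrefl _)
      · filter_upwards [self_mem_nhdsWithin] with r hr
        exact lt_of_le_of_lt (hg1 r).2 hbτ
  have htends2 : Tendsto g (𝓝[Set.Ioc s (l τ₀)] s) (𝓝[Set.Ioc τ₂ τ₀] τ₂) := by
    rw [tendsto_nhdsWithin_iff]
    exact ⟨htends, by filter_upwards [self_mem_nhdsWithin] with r hr using hgmem r hr⟩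
  have hfinal : Tendsto (fun r => f (γ (g r))) (𝓝[Set.Ioc s (l τ₀)] s) (𝓝 (f (γ t))) :=
    (hf t ht hτ₂lt).comp htends2
  have heq1 : f (γl s) = f (γ t) := by
    rw [← hlt]
    simp only [hl_def]
    rw [hγl t ht]
  show Tendsto (fun r => f (γl r)) (𝓝[Set.Ioc s (l τ₀)] s) (𝓝 (f (γl s)))
  rw [heq1]
  apply hfinal.congr'
  filter_upwards [self_mem_nhdsWithin] with r hr
  have hg0 : g r ∈ Set.Icc 0 τ₀ := ⟨hτ₂0.trans (hg1 r).1, (hg1 r).2⟩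
  have : γl (l (g r)) = γ (g r) := hγl (g r) hg0
  rw [← this, hg2 r hr]
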